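/- With F as above, the first component (in R^3) of F(u,v), namely P(u,v) = cosh(u cos θ) f(v) + sinh(u cos θ) f(v) ⊠ f'(v), satisfies <P,P> = -1 and P3(u,v) > 0 whenever f3 > 0; i.e., F maps into H × R. -/

import Mathlib

open Real

def mink (x y : Fin 3 → ℝ) : ℝ := x 0 * y 0 + x 1 * y 1 - x 2 * y 2

def lcross (a b : Fin 3 → ℝ) : Fin 3 → ℝ :=
  ![a 1 * b 2 - a 2 * b 1, a 2 * b 0 - a 0 * b 2, a 1 * b 0 - a 0 * b 1]

lemma fp_orth (f p : ℝ → Fin 3 → ℝ)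
    (hp : ∀ v j, HasDerivAt (fun t => f t j) (p v j) v)
    (hff : ∀ v, mink (f v) (f v) = -1) (v : ℝ) :
    mink (f v) (p v) = 0 := by
  have h1 : HasDerivAt (fun t => mink (f t) (f t))
      (2 * (f v 0 * p v 0 + f v 1 * p v 1 - f v 2 * p v 2)) v := by
    have h0 := ((hp v 0).mul (hp v 0)).add ((hp v 1).mul (hp v 1))
    have h2 := h0.sub ((hp v 2).mul (hp v 2))
    exact h2.congr_deriv (by ring)
  have h2 : HasDerivAt (fun t => mink (f t) (f t)) 0 v := by
    have : (fun t => mink (f t) (f t)) = fun _ => (-1 : ℝ) := funext hff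
    rw [this]; exact hasDerivAt_const v (-1)
  have := h1.unique h2
  simp only [mink]
  linarith

theorem F_maps_into_H_times_R (θ : ℝ) (f p : ℝ → Fin 3 → ℝ)
    (hp : ∀ v j, HasDerivAt (fun t => f t j) (p v j) v)
    (hff : ∀ v, mink (f v) (f v) = -1)
    (hpp : ∀ v, mink (p v) (p v) = 1) :
    ∀ u v,
      let P : Fin 3 → ℝ := fun j =>
        Real.cosh (u * Real.cos θ) * f v j +
          Real.sinh (u * Real.cos θ) * lcross (f v) (p v) j
      mink P P = -1 ∧ (f v 2 > 0 → P 2 > 0) := by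
  intro u v
  intro P
  have hfp := fp_orth f p hp hff v
  have hf := hff v
  have hP := hpp v
  have hw0 : lcross (f v) (p v) 0 = f v 1 * p v 2 - f v 2 * p v 1 := rfl
  have hw1 : lcross (f v) (p v) 1 = f v 2 * p v 0 - f v 0 * p v 2 := rfl
  have hw2 : lcross (f v) (p v) 2 = f v 1 * p v 0 - f v 0 * p v 1 := rfl
  simp only [mink, P, hw0, hw1, hw2] at hfp hf hP ⊢
  set f0 := f v 0; set f1 := f v 1; set f2 := f v 2
  set p0 := p v 0; set p1 := p v 1; set p2 := p v 2
  set c := Real.cosh (u * Real.cos θ) with hc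
  set s := Real.sinh (u * Real.cos θ) with hs
  have hcs : c ^ 2 - s ^ 2 = 1 := Real.cosh_sq_sub_sinh_sq _
  have hc1 : 1 ≤ c := Real.one_le_cosh _
  set w0 : ℝ := f1 * p2 - f2 * p1 with hW0
  set w1 : ℝ := f2 * p0 - f0 * p2 with hW1
  set w2 : ℝ := f1 * p0 - f0 * p1 with hW2
  have hww : w0 ^ 2 + w1 ^ 2 - w2 ^ 2 = 1 := by
    rw [hW0, hW1, hW2]
    linear_combination (f0 * p0 + f1 * p1 - f2 * p2) * hfp -
      (p0 * p0 + p1 * p1 - p2 * p2) * hf + hP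
  have hfw : f0 * w0 + f1 * w1 - f2 * w2 = 0 := by
    rw [hW0, hW1, hW2]; ring
  constructor
  · linear_combination c ^ 2 * hf + s ^ 2 * hww - hcs
  · intro hf2
    have e1 : f0 ^ 2 + f1 ^ 2 = f2 ^ 2 - 1 := by linear_combination hf
    have e2 : w0 ^ 2 + w1 ^ 2 = w2 ^ 2 + 1 := by linear_combination hww
    have key : f2 ^ 2 * w2 ^ 2 + (f0 * w1 - f1 * w0) ^ 2 =
        (f0 ^ 2 + f1 ^ 2) * (w0 ^ 2 + w1 ^ 2) := by
      linear_combination (f0 * w0 + f1 * w1 + f2 * w2) * hfw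
    have hle : w2 ^ 2 ≤ f2 ^ 2 - 1 := by
      nlinarith [key, e1, e2, sq_nonneg (f0 * w1 - f1 * w0)]
    set A : ℝ := c * f2 + s * w2 with hA
    set B : ℝ := c * f2 - s * w2 with hB
    have hprod : A * B > 0 := by
      have h4 : A * B = f2 ^ 2 + s ^ 2 * (f2 ^ 2 - w2 ^ 2) +
          (c ^ 2 - s ^ 2 - 1) * f2 ^ 2 := by rw [hA, hB]; ring
      have h5 : (0:ℝ) ≤ s ^ 2 * (f2 ^ 2 - w2 ^ 2) :=
        mul_nonneg (sq_nonneg s) (by linarith)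
      have h6 : (c ^ 2 - s ^ 2 - 1) * f2 ^ 2 = 0 := by
        rw [show c ^ 2 - s ^ 2 - 1 = 0 from by linarith]; ring
      have h7 : (0:ℝ) < f2 ^ 2 := pow_pos hf2 2
      rw [h4, h6]
      linarith
    have hcpos : (0:ℝ) < c := lt_of_lt_of_le one_pos hc1
    have hsum : A + B > 0 := by
      rw [hA, hB]
      have := mul_pos hcpos hf2
      linarith
    by_contra h
    push_neg at h
    have hBpos : 0 < B := by linarith
    have : A * B ≤ 0 := mul_nonpos_of_nonpos_of_nonneg h (le_of_lt hBpos)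
    linarith
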